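/- Let m ≠ 0 be a real number and define F : ℝ → ℝ by F(x) = 1 - x · ∫₀ˣ ((y²+1)^{m/2} - 1)/y² dy (the integrand extends continuously to y=0). Then for all x > 0, (d/dx)(F(x)/x) = -(1+x²)^{m/2}/x². -/

import Mathlib

open Real

/-- The function `F(x) = 1 - x ∫₀ˣ ((y²+1)^{m/2} - 1)/y² dy`, which coincides with the
hypergeometric function `₂F₁(-1/2, -m/2, 1/2, -x²)`. -/
noncomputable def hgF (m : ℝ) (x : ℝ) : ℝ :=
  1 - x * ∫ y in (0:ℝ)..x, ((y ^ 2 + 1) ^ (m / 2) - 1) / y ^ 2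

open Filter MeasureTheory intervalIntegral

noncomputable def hgH (m : ℝ) (y : ℝ) : ℝ :=
  if y = 0 then m / 2 else ((y ^ 2 + 1) ^ (m / 2) - 1) / y ^ 2

lemma hgH_cont (m : ℝ) : Continuous (hgH m) := by
  rw [continuous_iff_continuousAt]
  intro y
  rcases eq_or_ne y 0 with rfl | hy
  · -- continuity at 0
    have hd : HasDerivAt (fun u : ℝ => (1 + u) ^ (m / 2)) (m / 2) 0 := by
      have h1 : HasDerivAt (fun x : ℝ => x ^ (m / 2)) (m / 2 * (1:ℝ) ^ (m / 2 - 1)) 1 :=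
        Real.hasDerivAt_rpow_const (Or.inl one_ne_zero)
      have h2 : HasDerivAt (fun u : ℝ => 1 + u) 1 0 := (hasDerivAt_id 0).const_add 1
      have h1' : HasDerivAt (fun x : ℝ => x ^ (m / 2)) (m / 2 * (1:ℝ) ^ (m / 2 - 1))
          ((fun u : ℝ => 1 + u) 0) := by simpa using h1
      have h3 := h1'.comp 0 h2
      simpa [Real.one_rpow, Function.comp_def] using h3
    have hslope : Tendsto (fun u : ℝ => ((1 + u) ^ (m / 2) - 1) / u) (nhdsWithin 0 {0}ᶜ)
        (nhds (m / 2)) := by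
      have := hasDerivAt_iff_tendsto_slope.mp hd
      refine this.congr' ?_
      filter_upwards [self_mem_nhdsWithin] with u hu
      simp [slope_def_field, Real.one_rpow]
    have hsq : Tendsto (fun y : ℝ => y ^ 2) (nhdsWithin 0 {0}ᶜ) (nhdsWithin 0 {0}ᶜ) := by
      apply tendsto_nhdsWithin_of_tendsto_nhds_of_eventually_within
      · have h : Tendsto (fun y : ℝ => y ^ 2) (nhds 0) (nhds 0) := by
          simpa using (continuous_pow 2).tendsto (0:ℝ)
        exact h.mono_left nhdsWithin_le_nhds
      · filter_upwards [self_mem_nhdsWithin] with y hy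
        simpa using pow_ne_zero 2 hy
    have hg : Tendsto (fun y : ℝ => ((y ^ 2 + 1) ^ (m / 2) - 1) / y ^ 2)
        (nhdsWithin 0 {0}ᶜ) (nhds (m / 2)) := by
      have := hslope.comp hsq
      refine this.congr ?_
      intro y; simp [Function.comp, add_comm]
    have hH : Tendsto (hgH m) (nhdsWithin 0 {0}ᶜ) (nhds (m / 2)) := by
      refine hg.congr' ?_
      filter_upwards [self_mem_nhdsWithin] with y hy
      simp only [Set.mem_compl_iff, Set.mem_singleton_iff] at hy
      simp [hgH, hy]
    rw [ContinuousAt]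
    have : nhds (0:ℝ) = nhdsWithin 0 {0}ᶜ ⊔ pure 0 := (nhdsNE_sup_pure 0).symm
    rw [this]
    simp only [tendsto_sup]
    constructor
    · simpa [hgH] using hH
    · have h0 : hgH m 0 = m / 2 := if_pos rfl
      simpa [hgH] using tendsto_pure_nhds (hgH m) 0
  · -- continuity at y ≠ 0
    have hy2 : y ^ 2 ≠ 0 := pow_ne_zero 2 hy
    have hca : ContinuousAt (fun y : ℝ => ((y ^ 2 + 1) ^ (m / 2) - 1) / y ^ 2) y := by
      apply ContinuousAt.div
      · apply ContinuousAt.sub _ continuousAt_const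
        apply ContinuousAt.rpow_const (by fun_prop)
        left; positivity
      · fun_prop
      · exact hy2
    refine hca.congr ?_
    filter_upwards [isOpen_compl_singleton.mem_nhds hy] with z hz
    simp only [Set.mem_compl_iff, Set.mem_singleton_iff] at hz
    simp [hgH, hz]

/-- For `m ≠ 0` and `x > 0`, `(d/dx)(F(x)/x) = -(1+x²)^{m/2}/x²`. -/
theorem deriv_hgF_div_self (m : ℝ) (hm : m ≠ 0) :
    ∀ x > (0 : ℝ),
      deriv (fun t => hgF m t / t) x = -(1 + x ^ 2) ^ (m / 2) / x ^ 2 := by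
  intro x hx
  have hcont := hgH_cont m
  -- the integral of the original integrand equals integral of hgH
  have hint : ∀ t : ℝ, (∫ y in (0:ℝ)..t, ((y ^ 2 + 1) ^ (m / 2) - 1) / y ^ 2)
      = ∫ y in (0:ℝ)..t, hgH m y := by
    intro t
    apply intervalIntegral.integral_congr_ae
    have h0 : (volume : Measure ℝ) {(0:ℝ)} = 0 := measure_singleton 0
    filter_upwards [measure_eq_zero_iff_ae_notMem.mp h0] with y hy _
    simp only [Set.mem_singleton_iff] at hy
    simp [hgH, hy]
  -- rewrite the function near x
  have heq : (fun t => hgF m t / t) =ᶠ[nhds x] (fun t => 1 / t - ∫ y in (0:ℝ)..t, hgH m y) := by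
    filter_upwards [isOpen_Ioi.mem_nhds hx] with t (ht : 0 < t)
    rw [hgF, hint t]
    field_simp
  rw [heq.deriv_eq]
  have hd1 : HasDerivAt (fun t : ℝ => 1 / t) (-1 / x ^ 2) x := by
    simpa using (hasDerivAt_inv hx.ne').congr_deriv (by ring)
  have hd2 : HasDerivAt (fun t : ℝ => ∫ y in (0:ℝ)..t, hgH m y) (hgH m x) x :=
    (hcont.integral_hasStrictDerivAt 0 x).hasDerivAt
  have := (hd1.sub hd2).deriv
  rw [show (fun t => 1 / t - ∫ y in (0:ℝ)..t, hgH m y) = ((fun t : ℝ => 1 / t) - fun t => ∫ y in (0:ℝ)..t, hgH m y) from rfl, this]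
  have hx2 : x ^ 2 ≠ 0 := pow_ne_zero 2 hx.ne'
  rw [hgH, if_neg hx.ne']
  rw [add_comm (x^2) 1]
  field_simp
  ring
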